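/- (Iso-Wasserstein inequality) Let n ≥ 1, R > 0, and let B_{r₁} = B(0, r₁) and B_{r₂} = B(0, r₂) be two concentric open balls in ℝⁿ centered at the origin with 0 < r₁ ≤ r₂ ≤ R. Then for every measurable set A ⊆ B(0, R) with vol_n(A) = vol_n(B_{r₂}), one has W₂(P_A, P_{B_{r₁}}) ≥ W₂(P_{B_{r₂}}, P_{B_{r₁}}). In other words, among all subsets of B(0, R) of a fixed volume, the concentric ball minimizes the L²-Wasserstein distance of its uniform measure to the uniform measure on a smaller concentric ball. -/

import Mathlib

open MeasureTheory Metric Set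
open scoped ENNReal NNReal

noncomputable section

/-- The uniform probability measure on a set `S ⊆ ℝⁿ`: Lebesgue measure restricted to `S`
and normalized. -/
def unif {n : ℕ} (S : Set (EuclideanSpace ℝ (Fin n))) : Measure (EuclideanSpace ℝ (Fin n)) :=
  (volume S)⁻¹ • volume.restrict S

/-- The set of couplings of two measures `μ, ν` on `ℝⁿ`: measures on the product whose
marginals are `μ` and `ν`. -/
def couplings {n : ℕ} (μ ν : Measure (EuclideanSpace ℝ (Fin n))) :
    Set (Measure (EuclideanSpace ℝ (Fin n) × EuclideanSpace ℝ (Fin n))) :=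
  {γ | γ.map Prod.fst = μ ∧ γ.map Prod.snd = ν}

/-- The `L²`-Wasserstein distance between two measures on `ℝⁿ` (valued in `ℝ≥0∞`):
the infimum over all couplings `γ` of `(∫ ‖a − b‖² dγ(a, b))^{1/2}`. -/
def W2 {n : ℕ} (μ ν : Measure (EuclideanSpace ℝ (Fin n))) : ℝ≥0∞ :=
  ⨅ γ ∈ couplings μ ν, (∫⁻ w, edist w.1 w.2 ^ 2 ∂γ) ^ (1 / 2 : ℝ)


lemma smul_preimage_ball {n : ℕ} {c r : ℝ} (hc : 0 < c) :
    (fun x : EuclideanSpace ℝ (Fin n) => c • x) ⁻¹' ball (0 : EuclideanSpace ℝ (Fin n)) (c * r)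
      = ball (0 : EuclideanSpace ℝ (Fin n)) r := by
  ext x
  simp only [mem_preimage, mem_ball, dist_zero_right, norm_smul, Real.norm_eq_abs,
    abs_of_pos hc]
  exact mul_lt_mul_iff_right₀ hc

lemma map_unif_ball {n : ℕ} {c r : ℝ} (hc : 0 < c) (hr : 0 < r) :
    Measure.map (fun x : EuclideanSpace ℝ (Fin n) => c • x)
        (unif (ball (0 : EuclideanSpace ℝ (Fin n)) r))
      = unif (ball (0 : EuclideanSpace ℝ (Fin n)) (c * r)) := by
  set E := EuclideanSpace ℝ (Fin n)
  set k : ℝ≥0∞ := ENNReal.ofReal |(c ^ Module.finrank ℝ E)⁻¹| with hk_def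
  have hk0 : k ≠ 0 := by
    rw [hk_def]
    simp only [ne_eq, ENNReal.ofReal_eq_zero, not_le, abs_pos]
    positivity
  have hktop : k ≠ ∞ := ENNReal.ofReal_ne_top
  have hmap : Measure.map (fun x : E => c • x) volume = k • volume :=
    Measure.map_addHaar_smul volume hc.ne'
  have hmeas : Measurable (fun x : E => c • x) := measurable_id.const_smul c
  have hpre := smul_preimage_ball (n := n) (r := r) hc
  have hres : Measure.map (fun x : E => c • x) (volume.restrict (ball (0 : E) r))
      = k • volume.restrict (ball (0 : E) (c * r)) := by
    rw [← hpre, ← Measure.restrict_map hmeas measurableSet_ball, hmap, Measure.restrict_smul]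
  have hvol : volume (ball (0 : E) r) = k * volume (ball (0 : E) (c * r)) := by
    have h1 : (Measure.map (fun x : E => c • x) volume) (ball (0 : E) (c * r))
        = (k • (volume : Measure E)) (ball (0 : E) (c * r)) := by rw [hmap]
    rwa [Measure.map_apply hmeas measurableSet_ball, hpre, Measure.smul_apply,
      smul_eq_mul] at h1
  have hv2_0 : volume (ball (0 : E) (c * r)) ≠ 0 :=
    (measure_ball_pos volume _ (by positivity)).ne'
  have hv2_top : volume (ball (0 : E) (c * r)) ≠ ∞ := measure_ball_lt_top.ne
  unfold unif
  rw [Measure.map_smul, hres, smul_smul]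
  congr 1
  rw [hvol, ENNReal.mul_inv (Or.inl hk0) (Or.inl hktop), mul_comm, ← mul_assoc,
    ENNReal.mul_inv_cancel hk0 hktop, one_mul]

lemma bathtub {α : Type*} [MeasurableSpace α] (μ : Measure α) {s t : Set α}
    (hs : MeasurableSet s) (ht : MeasurableSet t) (hst : μ s = μ t) (hfin : μ t ≠ ∞)
    {g : α → ℝ≥0∞} (hg : Measurable g) (C : ℝ≥0∞)
    (h1 : ∀ x ∈ t, g x ≤ C) (h2 : ∀ x ∉ t, C ≤ g x) :
    ∫⁻ x in t, g x ∂μ ≤ ∫⁻ x in s, g x ∂μ := by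
  have hint : μ (t ∩ s) ≠ ∞ :=
    (lt_of_le_of_lt (measure_mono inter_subset_left) hfin.lt_top).ne
  have hts : μ (t \ s) = μ (s \ t) := by
    have h4 : μ (t ∩ s) + μ (t \ s) = μ (t ∩ s) + μ (s \ t) := by
      rw [add_comm (μ (t ∩ s)) (μ (t \ s)), measure_diff_add_inter t hs,
        add_comm (μ (t ∩ s)) (μ (s \ t)), inter_comm t s, measure_diff_add_inter s ht, hst]
    exact (ENNReal.add_right_inj hint).mp h4
  have hdisj : ∀ u v : Set α, Disjoint (u ∩ v) (u \ v) :=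
    fun u v => disjoint_left.mpr fun x hx hx2 => hx2.2 hx.2
  calc ∫⁻ x in t, g x ∂μ
      = ∫⁻ x in t ∩ s, g x ∂μ + ∫⁻ x in t \ s, g x ∂μ := by
        rw [← lintegral_union (ht.diff hs) (hdisj t s), inter_union_diff]
    _ ≤ ∫⁻ x in t ∩ s, g x ∂μ + ∫⁻ x in s \ t, g x ∂μ := by
        gcongr ?_ + ?_
        · exact le_rfl
        · calc ∫⁻ x in t \ s, g x ∂μ
              ≤ ∫⁻ _x in t \ s, C ∂μ := setLIntegral_mono measurable_const fun x hx => h1 x hx.1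
            _ = C * μ (t \ s) := setLIntegral_const _ _
            _ = C * μ (s \ t) := by rw [hts]
            _ = ∫⁻ _x in s \ t, C ∂μ := (setLIntegral_const _ _).symm
            _ ≤ ∫⁻ x in s \ t, g x ∂μ := setLIntegral_mono hg fun x hx => h2 x hx.2
    _ = ∫⁻ x in s, g x ∂μ := by
        rw [inter_comm t s, ← lintegral_union (hs.diff ht) (hdisj s t), inter_union_diff]

lemma dual_pointwise {n : ℕ} {c : ℝ} (hc : 1 ≤ c) (a b : EuclideanSpace ℝ (Fin n)) :
    ENNReal.ofReal (1 - 1/c) * (‖a‖₊ : ℝ≥0∞) ^ 2 ≤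
      edist a b ^ 2 + ENNReal.ofReal (c - 1) * (‖b‖₊ : ℝ≥0∞) ^ 2 := by
  have hc0 : (0:ℝ) < c := lt_of_lt_of_le one_pos hc
  have hκ : (0:ℝ) ≤ 1 - 1/c := by
    have : 1/c ≤ 1 := by rw [div_le_one hc0]; exact hc
    linarith
  have key : (1 - 1/c) * ‖a‖ ^ 2 ≤ ‖a - b‖ ^ 2 + (c - 1) * ‖b‖ ^ 2 := by
    have h1 : ‖a‖ - ‖b‖ ≤ ‖a - b‖ := norm_sub_norm_le a b
    have h2 : ‖b‖ - ‖a‖ ≤ ‖a - b‖ := by rw [norm_sub_rev]; exact norm_sub_norm_le b a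
    have h3 : c * (1/c) = 1 := mul_one_div_cancel hc0.ne'
    nlinarith [sq_nonneg (‖a‖ - c * ‖b‖), norm_nonneg (a - b), norm_nonneg a, norm_nonneg b,
      mul_nonneg (sub_nonneg.2 h1) (by linarith : (0:ℝ) ≤ ‖a - b‖ + (‖a‖ - ‖b‖)),
      mul_nonneg (mul_nonneg (by linarith : (0:ℝ) ≤ c - 1) (norm_nonneg b)) (norm_nonneg b)]
  have ea : (‖a‖₊ : ℝ≥0∞) ^ 2 = ENNReal.ofReal (‖a‖ ^ 2) := by
    rw [← enorm_eq_nnnorm, ← ofReal_norm, ← ENNReal.ofReal_pow (norm_nonneg a)]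
  have eb : (‖b‖₊ : ℝ≥0∞) ^ 2 = ENNReal.ofReal (‖b‖ ^ 2) := by
    rw [← enorm_eq_nnnorm, ← ofReal_norm, ← ENNReal.ofReal_pow (norm_nonneg b)]
  have ed : edist a b ^ 2 = ENNReal.ofReal (‖a - b‖ ^ 2) := by
    rw [edist_eq_enorm_sub, ← ofReal_norm,
      ← ENNReal.ofReal_pow (norm_nonneg _)]
  rw [ea, eb, ed, ← ENNReal.ofReal_mul hκ, ← ENNReal.ofReal_mul (by linarith : (0:ℝ) ≤ c - 1),
    ← ENNReal.ofReal_add (by positivity) (mul_nonneg (by linarith) (by positivity))]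
  exact ENNReal.ofReal_le_ofReal key

/-- **Iso-Wasserstein inequality.** Let `0 < r₁ ≤ r₂ ≤ R` and let `B_{r₁}, B_{r₂}` be
concentric open balls centered at the origin of `ℝⁿ`. For every measurable `A ⊆ B(0, R)`
with `vol(A) = vol(B_{r₂})`, one has `W₂(P_A, P_{B_{r₁}}) ≥ W₂(P_{B_{r₂}}, P_{B_{r₁}})`:
among all subsets of `B(0, R)` of a fixed volume, the concentric ball minimizes the
`L²`-Wasserstein distance of its uniform measure to that of a smaller concentric ball. -/
theorem iso_wasserstein_inequality (n : ℕ) (hn : 1 ≤ n) (R r₁ r₂ : ℝ)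
    (hr₁ : 0 < r₁) (hr₁₂ : r₁ ≤ r₂) (hr₂R : r₂ ≤ R)
    (A : Set (EuclideanSpace ℝ (Fin n))) (hA : MeasurableSet A)
    (hAsub : A ⊆ ball (0 : EuclideanSpace ℝ (Fin n)) R)
    (hAvol : volume A = volume (ball (0 : EuclideanSpace ℝ (Fin n)) r₂)) :
    W2 (unif A) (unif (ball (0 : EuclideanSpace ℝ (Fin n)) r₁)) ≥
      W2 (unif (ball (0 : EuclideanSpace ℝ (Fin n)) r₂))
        (unif (ball (0 : EuclideanSpace ℝ (Fin n)) r₁)) := by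
  have hr₂ : 0 < r₂ := lt_of_lt_of_le hr₁ hr₁₂
  set c : ℝ := r₂ / r₁ with hc_def
  have hc1 : (1:ℝ) ≤ c := (one_le_div hr₁).mpr hr₁₂
  have hc0 : (0:ℝ) < c := lt_of_lt_of_le one_pos hc1
  have hcr : c * r₁ = r₂ := div_mul_cancel₀ r₂ hr₁.ne'
  set g : EuclideanSpace ℝ (Fin n) → ℝ≥0∞ := fun x => (‖x‖₊ : ℝ≥0∞) ^ 2 with hg_def
  have hg : Measurable g := measurable_nnnorm.coe_nnreal_ennreal.pow_const 2
  have hgx : ∀ x : EuclideanSpace ℝ (Fin n), g x = ENNReal.ofReal (‖x‖ ^ 2) := fun x => by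
    show (‖x‖₊ : ℝ≥0∞) ^ 2 = _
    rw [← enorm_eq_nnnorm, ← ofReal_norm, ← ENNReal.ofReal_pow (norm_nonneg x)]
  set κ : ℝ≥0∞ := ENNReal.ofReal (1 - 1/c) with hκ_def
  set δ : ℝ≥0∞ := ENNReal.ofReal (c - 1) with hδ_def
  set M₁ : ℝ≥0∞ := ∫⁻ b, g b ∂(unif (ball (0 : EuclideanSpace ℝ (Fin n)) r₁)) with hM₁_def
  -- basic volume facts
  have hv1_0 : volume (ball (0 : EuclideanSpace ℝ (Fin n)) r₁) ≠ 0 := (measure_ball_pos volume _ hr₁).ne'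
  have hv1_top : volume (ball (0 : EuclideanSpace ℝ (Fin n)) r₁) ≠ ∞ := measure_ball_lt_top.ne
  have hv2_top : volume (ball (0 : EuclideanSpace ℝ (Fin n)) r₂) ≠ ∞ := measure_ball_lt_top.ne
  -- M₁ is finite
  have hM₁top : M₁ ≠ ∞ := by
    have hle : M₁ ≤ (volume (ball (0 : EuclideanSpace ℝ (Fin n)) r₁))⁻¹ * (ENNReal.ofReal (r₁ ^ 2) * volume (ball (0 : EuclideanSpace ℝ (Fin n)) r₁)) := by
      rw [hM₁_def]
      unfold unif
      rw [lintegral_smul_measure]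
      refine mul_le_mul_right ?_ _
      calc ∫⁻ x in ball (0 : EuclideanSpace ℝ (Fin n)) r₁, g x ∂volume
          ≤ ∫⁻ _x in ball (0 : EuclideanSpace ℝ (Fin n)) r₁, ENNReal.ofReal (r₁ ^ 2) ∂volume := by
            refine setLIntegral_mono measurable_const fun x hx => ?_
            rw [hgx x]
            refine ENNReal.ofReal_le_ofReal ?_
            have hx' : ‖x‖ < r₁ := by simpa [mem_ball, dist_zero_right] using hx
            nlinarith [norm_nonneg x]
        _ = ENNReal.ofReal (r₁ ^ 2) * volume (ball (0 : EuclideanSpace ℝ (Fin n)) r₁) := setLIntegral_const _ _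
    exact ne_top_of_le_ne_top
      (ENNReal.mul_ne_top (ENNReal.inv_ne_top.mpr hv1_0)
        (ENNReal.mul_ne_top ENNReal.ofReal_ne_top hv1_top)) hle
  -- scaling: unif B₂ is pushforward of unif B₁
  have hmapB : Measure.map (fun x : EuclideanSpace ℝ (Fin n) => c • x) (unif (ball (0 : EuclideanSpace ℝ (Fin n)) r₁)) = unif (ball (0 : EuclideanSpace ℝ (Fin n)) r₂) := by
    have := map_unif_ball (n := n) (c := c) (r := r₁) hc0 hr₁
    rwa [hcr] at this
  have hmeasc : Measurable (fun x : EuclideanSpace ℝ (Fin n) => c • x) := measurable_id.const_smul c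
  -- second moment of unif B₂
  have hM₂ : ∫⁻ a, g a ∂(unif (ball (0 : EuclideanSpace ℝ (Fin n)) r₂)) = (‖c‖₊ : ℝ≥0∞) ^ 2 * M₁ := by
    rw [← hmapB, lintegral_map hg hmeasc]
    have hsc : ∀ b : EuclideanSpace ℝ (Fin n), g (c • b) = (‖c‖₊ : ℝ≥0∞) ^ 2 * g b := fun b => by
      simp [hg_def, nnnorm_smul, ENNReal.coe_mul, mul_pow]
    simp_rw [hsc]
    rw [lintegral_const_mul _ hg, hM₁_def]
  -- bathtub: second moment of unif A dominates that of unif B₂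
  have hAB : ∫⁻ x in ball (0 : EuclideanSpace ℝ (Fin n)) r₂, g x ∂volume ≤ ∫⁻ x in A, g x ∂volume := by
    refine bathtub volume hA measurableSet_ball hAvol hv2_top hg (ENNReal.ofReal (r₂ ^ 2))
      (fun x hx => ?_) (fun x hx => ?_)
    · rw [hgx x]
      refine ENNReal.ofReal_le_ofReal ?_
      have hx' : ‖x‖ < r₂ := by simpa [mem_ball, dist_zero_right] using hx
      nlinarith [norm_nonneg x]
    · rw [hgx x]
      refine ENNReal.ofReal_le_ofReal ?_
      have hx' : r₂ ≤ ‖x‖ := by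
        by_contra h
        exact hx (by simpa [mem_ball, dist_zero_right] using not_le.mp h)
      nlinarith [norm_nonneg x]
  have hMA : (‖c‖₊ : ℝ≥0∞) ^ 2 * M₁ ≤ ∫⁻ a, g a ∂(unif A) := by
    rw [← hM₂]
    unfold unif
    rw [lintegral_smul_measure, lintegral_smul_measure, hAvol]
    exact mul_le_mul_right hAB _
  -- the dual constant identity
  have hconst : κ * (‖c‖₊ : ℝ≥0∞) ^ 2 = δ ^ 2 + δ := by
    rw [hκ_def, hδ_def, ← enorm_eq_nnnorm, Real.enorm_eq_ofReal hc0.le, ← ENNReal.ofReal_pow hc0.le,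
      ← ENNReal.ofReal_mul (by
        have : 1/c ≤ 1 := by rw [div_le_one hc0]; exact hc1
        linarith),
      ← ENNReal.ofReal_pow (by linarith : (0:ℝ) ≤ c - 1),
      ← ENNReal.ofReal_add (sq_nonneg _) (by linarith : (0:ℝ) ≤ c - 1)]
    congr 1
    field_simp
    ring
  have hδM₁top : δ * M₁ ≠ ∞ := ENNReal.mul_ne_top ENNReal.ofReal_ne_top hM₁top
  have hedist : Measurable (fun w : EuclideanSpace ℝ (Fin n) × EuclideanSpace ℝ (Fin n) => edist w.1 w.2 ^ 2) :=
    (measurable_fst.edist measurable_snd).pow_const 2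
  -- key lower bound for any coupling
  have keybound : ∀ γ ∈ couplings (unif A) (unif (ball (0 : EuclideanSpace ℝ (Fin n)) r₁)),
      δ ^ 2 * M₁ ≤ ∫⁻ w, edist w.1 w.2 ^ 2 ∂γ := by
    rintro γ ⟨hfst, hsnd⟩
    have hMAγ : ∫⁻ w, g w.1 ∂γ = ∫⁻ a, g a ∂(unif A) := by
      rw [← hfst, lintegral_map hg measurable_fst]
    have hM₁γ : ∫⁻ w, g w.2 ∂γ = M₁ := by
      rw [hM₁_def, ← hsnd, lintegral_map hg measurable_snd]
    have hg1 : Measurable fun w : EuclideanSpace ℝ (Fin n) × EuclideanSpace ℝ (Fin n) => g w.1 :=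
      hg.comp measurable_fst
    have hg2 : Measurable fun w : EuclideanSpace ℝ (Fin n) × EuclideanSpace ℝ (Fin n) => g w.2 :=
      hg.comp measurable_snd
    have e0 : ∫⁻ w, κ * g w.1 ∂γ = κ * ∫⁻ a, g a ∂(unif A) := by
      rw [← hMAγ]; exact lintegral_const_mul κ hg1
    have e1 : ∫⁻ w, (edist w.1 w.2 ^ 2 + δ * g w.2) ∂γ
        = (∫⁻ w, edist w.1 w.2 ^ 2 ∂γ) + ∫⁻ w, δ * g w.2 ∂γ := lintegral_add_left hedist _
    have e2 : ∫⁻ w, δ * g w.2 ∂γ = δ * M₁ := by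
      rw [← hM₁γ]; exact lintegral_const_mul δ hg2
    have step1 : κ * ∫⁻ a, g a ∂(unif A) ≤ (∫⁻ w, edist w.1 w.2 ^ 2 ∂γ) + δ * M₁ := by
      calc κ * ∫⁻ a, g a ∂(unif A) = ∫⁻ w, κ * g w.1 ∂γ := e0.symm
        _ ≤ ∫⁻ w, (edist w.1 w.2 ^ 2 + δ * g w.2) ∂γ :=
            lintegral_mono fun w => dual_pointwise hc1 w.1 w.2
        _ = (∫⁻ w, edist w.1 w.2 ^ 2 ∂γ) + δ * M₁ := by rw [e1, e2]
    have step2 : δ ^ 2 * M₁ + δ * M₁ ≤ (∫⁻ w, edist w.1 w.2 ^ 2 ∂γ) + δ * M₁ := by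
      calc δ ^ 2 * M₁ + δ * M₁ = (δ ^ 2 + δ) * M₁ := by ring
        _ = κ * ((‖c‖₊ : ℝ≥0∞) ^ 2 * M₁) := by rw [← hconst, mul_assoc]
        _ ≤ κ * ∫⁻ a, g a ∂(unif A) := mul_le_mul_right hMA _
        _ ≤ _ := step1
    exact (ENNReal.add_le_add_iff_right hδM₁top).mp step2
  -- the scaling coupling between unif B₂ and unif B₁
  have hf0 : Measurable (fun b : EuclideanSpace ℝ (Fin n) => (c • b, b)) := hmeasc.prodMk measurable_id
  set γ₀ : Measure (EuclideanSpace ℝ (Fin n) × EuclideanSpace ℝ (Fin n)) := Measure.map (fun b : EuclideanSpace ℝ (Fin n) => (c • b, b)) (unif (ball (0 : EuclideanSpace ℝ (Fin n)) r₁))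
    with hγ₀_def
  have hγ₀ : γ₀ ∈ couplings (unif (ball (0 : EuclideanSpace ℝ (Fin n)) r₂)) (unif (ball (0 : EuclideanSpace ℝ (Fin n)) r₁)) := by
    constructor
    · rw [hγ₀_def, Measure.map_map measurable_fst hf0]
      exact hmapB
    · rw [hγ₀_def, Measure.map_map measurable_snd hf0]
      exact Measure.map_id
  have hcost₀ : ∫⁻ w, edist w.1 w.2 ^ 2 ∂γ₀ = δ ^ 2 * M₁ := by
    rw [hγ₀_def, lintegral_map hedist hf0]
    have hpt : ∀ b : EuclideanSpace ℝ (Fin n), edist (c • b) b ^ 2 = δ ^ 2 * g b := fun b => by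
      have hsub : c • b - b = (c - 1) • b := by rw [sub_smul, one_smul]
      rw [edist_eq_enorm_sub, hsub, enorm_smul, hδ_def,
        ← Real.enorm_eq_ofReal (by linarith : (0:ℝ) ≤ c - 1)]
      simp [hg_def, ENNReal.coe_mul, mul_pow, enorm_eq_nnnorm]
    simp_rw [hpt]
    rw [lintegral_const_mul _ hg, hM₁_def]
  -- conclude
  rw [ge_iff_le, W2, W2]
  refine le_trans (iInf₂_le γ₀ hγ₀) ?_
  rw [hcost₀]
  exact le_iInf₂ fun γ hγ => ENNReal.rpow_le_rpow (keybound γ hγ) (by norm_num)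

end
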